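/- Let θ : ℝ → ℝ be differentiable and positive on an interval containing 0, with θ'(t) ≤ -θ(t)²/3 and θ(0) = θ_i > 0. Then θ cannot be extended as a positive differentiable solution of this inequality to any t ≤ -3/θ_i; that is, if θ is defined, positive, and satisfies the inequality on [T, 0], then T > -3/θ_i. -/
import Mathlib


theorem stmt_3 (θ : ℝ → ℝ) (θi T : ℝ) (hT : T ≤ 0)
    (hdiff : Differentiable ℝ θ)
    (hpos : ∀ t ∈ Set.Icc T (0 : ℝ), 0 < θ t)
    (hineq : ∀ t ∈ Set.Icc T (0 : ℝ), deriv θ t ≤ -(θ t) ^ 2 / 3)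
    (h0 : θ 0 = θi) (hθi : 0 < θi) :
    T > -3 / θi := by
  set g : ℝ → ℝ := fun t => 3 / θ t - t with hg
  have hmono : MonotoneOn g (Set.Icc T 0) := by
    apply monotoneOn_of_deriv_nonneg (convex_Icc T 0)
    · apply ContinuousOn.sub
      · exact ContinuousOn.div continuousOn_const hdiff.continuous.continuousOn
          (fun t ht => (hpos t ht).ne')
      · exact continuousOn_id
    · intro t ht
      rw [interior_Icc] at ht
      have hne : θ t ≠ 0 := (hpos t (Set.Ioo_subset_Icc_self ht)).ne'
      exact DifferentiableAt.differentiableWithinAt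
        (((differentiableAt_const 3).div (hdiff t) hne).sub differentiableAt_id)
    · intro t ht
      rw [interior_Icc] at ht
      have htm := Set.Ioo_subset_Icc_self ht
      have hθt := hpos t htm
      have hne : θ t ≠ 0 := hθt.ne'
      have hD : HasDerivAt g ((0 * θ t - 3 * deriv θ t) / (θ t) ^ 2 - 1) t :=
        (((hasDerivAt_const t 3).div ((hdiff t).hasDerivAt) hne)).sub (hasDerivAt_id t)
      rw [hD.deriv]
      have h1 := hineq t htm
      have h2 : θ t ^ 2 ≤ -3 * deriv θ t := by nlinarith
      have h3 : (0 * θ t - 3 * deriv θ t) / (θ t) ^ 2 ≥ 1 := by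
        rw [ge_iff_le, le_div_iff₀ (by positivity)]
        nlinarith
      linarith
  have hTmem : T ∈ Set.Icc T (0:ℝ) := ⟨le_refl T, hT⟩
  have h0mem : (0:ℝ) ∈ Set.Icc T (0:ℝ) := ⟨hT, le_refl 0⟩
  have := hmono hTmem h0mem hT
  simp only [hg, h0, sub_zero] at this
  have hθTpos := hpos T hTmem
  have hθT : 0 < 3 / θ T := by positivity
  have h3θi : 0 < 3 / θi := by positivity
  have : -T < 3 / θi := by linarith
  have : -(3 / θi) < T := by linarith
  calc -3 / θi = -(3/θi) := by ring
    _ < T := this
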